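/- Let X₁ and X₂ be real-valued random variables on a probability space with |X₁| ≤ C₁ and |X₂| ≤ C₂ almost surely, and suppose that for all events A₁ in the σ-algebra generated by X₁ and A₂ in the σ-algebra generated by X₂ we have |P(A₁ ∩ A₂) − P(A₁)P(A₂)| ≤ α. Then |E[X₁X₂] − E[X₁]E[X₂]| ≤ 4 C₁ C₂ α. -/

import Mathlib

open MeasureTheory ProbabilityTheory

namespace MixingCovAux

lemma measurable_realSign : Measurable Real.sign := by
  have h : Real.sign = fun r : ℝ => if r < 0 then (-1 : ℝ) else if 0 < r then 1 else 0 := by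
    funext r; rfl
  rw [h]
  exact Measurable.ite measurableSet_Iio measurable_const
    (Measurable.ite measurableSet_Ioi measurable_const measurable_const)

lemma sign_mul_self (r : ℝ) : Real.sign r * r = |r| := by
  rcases lt_trichotomy r 0 with h | h | h
  · rw [Real.sign_of_neg h, abs_of_neg h]; ring
  · simp [h]
  · rw [Real.sign_of_pos h, abs_of_pos h, one_mul]

variable {Ω : Type*} {m0 : MeasurableSpace Ω} (P : Measure Ω) [IsProbabilityMeasure P]

noncomputable def mcov (f g : Ω → ℝ) : ℝ :=
  (∫ ω, f ω * g ω ∂P) - (∫ ω, f ω ∂P) * (∫ ω, g ω ∂P)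

lemma mcov_comm (f g : Ω → ℝ) : mcov P f g = mcov P g f := by
  unfold mcov
  simp_rw [mul_comm (f _) (g _)]
  ring

lemma int_of_bound {f : Ω → ℝ} (hf : AEStronglyMeasurable f P) {C : ℝ}
    (h : ∀ᵐ ω ∂P, |f ω| ≤ C) : Integrable f P := by
  refine (integrable_const C).mono' hf ?_
  filter_upwards [h] with ω hω
  simpa [Real.norm_eq_abs] using hω

lemma bdd_mul {f g : Ω → ℝ} (hf : AEStronglyMeasurable f P) (hg : Integrable g P) {C : ℝ}
    (hfb : ∀ᵐ ω ∂P, |f ω| ≤ C) : Integrable (fun ω => f ω * g ω) P := by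
  refine Integrable.mono' (hg.abs.const_mul C) (hf.mul hg.1) ?_
  filter_upwards [hfb] with ω h
  rw [Real.norm_eq_abs, abs_mul]
  exact mul_le_mul_of_nonneg_right h (abs_nonneg _)

end MixingCovAux

namespace MixingCovAux
set_option linter.unusedSectionVars false

variable {Ω : Type*} {m0 : MeasurableSpace Ω} (P : Measure Ω) [IsProbabilityMeasure P]

lemma reduce {m : MeasurableSpace Ω} (hm : m ≤ m0) (f g : Ω → ℝ)
    (hf : StronglyMeasurable[m] f) (hg : Integrable g P) {C : ℝ}
    (hfb : ∀ᵐ ω ∂P, |f ω| ≤ C) :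
    ∃ η : Ω → ℝ, StronglyMeasurable[m] η ∧ (∀ ω, η ω = -1 ∨ η ω = 0 ∨ η ω = 1) ∧
      |mcov P f g| ≤ C * mcov P η g := by
  haveI : SigmaFinite (P.trim hm) := inferInstance
  have hfm : AEStronglyMeasurable[m0] f P := ((hf.mono hm).measurable).aestronglyMeasurable
  have hfint : Integrable f P := int_of_bound P hfm hfb
  have hfg : Integrable (f * g) P := bdd_mul P hfm hg hfb
  set c : ℝ := ∫ ω, g ω ∂P with hc
  set e : Ω → ℝ := P[g|m] with he
  have heint : Integrable e P := integrable_condExp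
  set h : Ω → ℝ := fun ω => e ω - c with hh
  have hhsm : Measurable[m] h := (stronglyMeasurable_condExp.measurable).sub measurable_const
  have hhint : Integrable h P := heint.sub (integrable_const c)
  have hfe : Integrable (fun ω => f ω * e ω) P := bdd_mul P hfm heint hfb
  have hfh : Integrable (fun ω => f ω * h ω) P := bdd_mul P hfm hhint hfb
  -- step 1 : ∫ f g = ∫ f e
  have h1 : ∫ ω, f ω * g ω ∂P = ∫ ω, f ω * e ω ∂P := by
    calc ∫ ω, f ω * g ω ∂P = ∫ ω, (f * g) ω ∂P := rfl
      _ = ∫ ω, (P[f * g|m]) ω ∂P := (integral_condExp hm).symm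
      _ = ∫ ω, (f * P[g|m]) ω ∂P :=
          integral_congr_ae (condExp_mul_of_stronglyMeasurable_left hf hfg hg)
      _ = ∫ ω, f ω * e ω ∂P := rfl
  have key : mcov P f g = ∫ ω, f ω * h ω ∂P := by
    have h2 : ∫ ω, f ω * h ω ∂P = (∫ ω, f ω * e ω ∂P) - (∫ ω, f ω ∂P) * c := by
      have : ∀ ω, f ω * h ω = f ω * e ω - f ω * c := by intro ω; simp [hh]; ring
      simp_rw [this]
      rw [integral_sub hfe (hfint.mul_const c), integral_mul_const]
    rw [mcov, h1, h2]
  -- the sign function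
  set η : Ω → ℝ := fun ω => Real.sign (h ω) with hη
  have hηsm : StronglyMeasurable[m] η :=
    (measurable_realSign.comp hhsm).stronglyMeasurable
  have hηval : ∀ ω, η ω = -1 ∨ η ω = 0 ∨ η ω = 1 := fun ω => Real.sign_apply_eq (h ω)
  have hηb : ∀ᵐ ω ∂P, |η ω| ≤ 1 := Filter.Eventually.of_forall (fun ω => by
    rcases hηval ω with h' | h' | h' <;> simp [h'])
  have hηm0 : AEStronglyMeasurable[m0] η P := ((hηsm.mono hm).measurable).aestronglyMeasurable
  have hηint : Integrable η P := int_of_bound P hηm0 hηb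
  have hηg : Integrable (η * g) P := bdd_mul P hηm0 hg hηb
  have hηe : Integrable (fun ω => η ω * e ω) P := bdd_mul P hηm0 heint hηb
  -- ∫ η h = mcov η g
  have h3 : ∫ ω, η ω * g ω ∂P = ∫ ω, η ω * e ω ∂P := by
    calc ∫ ω, η ω * g ω ∂P = ∫ ω, (η * g) ω ∂P := rfl
      _ = ∫ ω, (P[η * g|m]) ω ∂P := (integral_condExp hm).symm
      _ = ∫ ω, (η * P[g|m]) ω ∂P :=
          integral_congr_ae (condExp_mul_of_stronglyMeasurable_left hηsm hηg hg)
      _ = ∫ ω, η ω * e ω ∂P := rfl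
  have h4 : mcov P η g = ∫ ω, |h ω| ∂P := by
    have h5 : ∫ ω, η ω * h ω ∂P = (∫ ω, η ω * e ω ∂P) - (∫ ω, η ω ∂P) * c := by
      have : ∀ ω, η ω * h ω = η ω * e ω - η ω * c := by intro ω; simp [hh]; ring
      simp_rw [this]
      rw [integral_sub hηe (hηint.mul_const c), integral_mul_const]
    have h6 : ∀ ω, η ω * h ω = |h ω| := fun ω => sign_mul_self (h ω)
    rw [mcov, h3, ← h5]
    exact integral_congr_ae (Filter.Eventually.of_forall h6)
  refine ⟨η, hηsm, hηval, ?_⟩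
  rw [key, h4]
  calc |∫ ω, f ω * h ω ∂P| ≤ ∫ ω, |f ω * h ω| ∂P := by
        have := norm_integral_le_integral_norm (μ := P) (fun ω => f ω * h ω)
        simp only [Real.norm_eq_abs] at this
        exact this
    _ ≤ ∫ ω, C * |h ω| ∂P := by
        refine integral_mono_ae hfh.abs (hhint.abs.const_mul C) ?_
        filter_upwards [hfb] with ω h'
        rw [abs_mul]
        exact mul_le_mul_of_nonneg_right h' (abs_nonneg _)
    _ = C * ∫ ω, |h ω| ∂P := integral_const_mul C _

end MixingCovAux

namespace MixingCovAux
set_option linter.unusedSectionVars false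

variable {Ω : Type*} {m0 : MeasurableSpace Ω} (P : Measure Ω) [IsProbabilityMeasure P]

lemma mcov_indicator {A B : Set Ω} (hA : MeasurableSet A) (hB : MeasurableSet B) :
    mcov P (A.indicator 1) (B.indicator 1)
      = (P (A ∩ B)).toReal - (P A).toReal * (P B).toReal := by
  unfold mcov
  have h1 : ∀ ω, (A.indicator (1 : Ω → ℝ)) ω * (B.indicator 1) ω
      = ((A ∩ B).indicator (1 : Ω → ℝ)) ω := by
    intro ω; rw [Set.inter_indicator_one]; rfl
  simp_rw [h1]
  rw [integral_indicator_one (hA.inter hB), integral_indicator_one hA, integral_indicator_one hB]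
  rfl

lemma ind_int {A : Set Ω} (hA : MeasurableSet A) : Integrable (A.indicator (1 : Ω → ℝ)) P := by
  refine int_of_bound P ((measurable_one.indicator hA).aestronglyMeasurable)
    (C := 1) (Filter.Eventually.of_forall fun ω => ?_)
  classical
  by_cases h : ω ∈ A <;> simp [Set.indicator_apply, h]

lemma mcov_sign {m₁ m₂ : MeasurableSpace Ω} (hm₁ : m₁ ≤ m0) (hm₂ : m₂ ≤ m0) {α : ℝ}
    (hα : ∀ A B : Set Ω, MeasurableSet[m₁] A → MeasurableSet[m₂] B →
      |(P (A ∩ B)).toReal - (P A).toReal * (P B).toReal| ≤ α)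
    (η ξ : Ω → ℝ) (hη : StronglyMeasurable[m₁] η) (hξ : StronglyMeasurable[m₂] ξ)
    (hηv : ∀ ω, η ω = -1 ∨ η ω = 0 ∨ η ω = 1) (hξv : ∀ ω, ξ ω = -1 ∨ ξ ω = 0 ∨ ξ ω = 1) :
    |mcov P η ξ| ≤ 4 * α := by
  classical
  set Ap : Set Ω := η ⁻¹' {1} with hAp
  set An : Set Ω := η ⁻¹' {-1} with hAn
  set Bp : Set Ω := ξ ⁻¹' {1} with hBp
  set Bn : Set Ω := ξ ⁻¹' {-1} with hBn
  have hApm : MeasurableSet[m₁] Ap := hη.measurable (measurableSet_singleton 1)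
  have hAnm : MeasurableSet[m₁] An := hη.measurable (measurableSet_singleton (-1))
  have hBpm : MeasurableSet[m₂] Bp := hξ.measurable (measurableSet_singleton 1)
  have hBnm : MeasurableSet[m₂] Bn := hξ.measurable (measurableSet_singleton (-1))
  have hAp0 : MeasurableSet[m0] Ap := hm₁ _ hApm
  have hAn0 : MeasurableSet[m0] An := hm₁ _ hAnm
  have hBp0 : MeasurableSet[m0] Bp := hm₂ _ hBpm
  have hBn0 : MeasurableSet[m0] Bn := hm₂ _ hBnm
  set a : Ω → ℝ := Ap.indicator 1 with ha
  set b : Ω → ℝ := An.indicator 1 with hb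
  set c : Ω → ℝ := Bp.indicator 1 with hc
  set d : Ω → ℝ := Bn.indicator 1 with hd
  have hηeq : ∀ ω, η ω = a ω - b ω := by
    intro ω
    rcases hηv ω with h' | h' | h' <;>
      simp [ha, hb, hAp, hAn, Set.indicator_apply, Set.mem_preimage, h'] <;> norm_num
  have hξeq : ∀ ω, ξ ω = c ω - d ω := by
    intro ω
    rcases hξv ω with h' | h' | h' <;>
      simp [hc, hd, hBp, hBn, Set.indicator_apply, Set.mem_preimage, h'] <;> norm_num
  -- integrability of indicator products
  have Ia := ind_int P hAp0
  have Ib := ind_int P hAn0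
  have Ic := ind_int P hBp0
  have Id := ind_int P hBn0
  have hb1 : ∀ (A : Set Ω), ∀ᵐ ω ∂P, |(A.indicator (1 : Ω → ℝ)) ω| ≤ 1 := by
    intro A
    refine Filter.Eventually.of_forall fun ω => ?_
    by_cases h : ω ∈ A <;> simp [Set.indicator_apply, h]
  have Iac : Integrable (fun ω => a ω * c ω) P := bdd_mul P Ia.1 Ic (hb1 Ap)
  have Iad : Integrable (fun ω => a ω * d ω) P := bdd_mul P Ia.1 Id (hb1 Ap)
  have Ibc : Integrable (fun ω => b ω * c ω) P := bdd_mul P Ib.1 Ic (hb1 An)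
  have Ibd : Integrable (fun ω => b ω * d ω) P := bdd_mul P Ib.1 Id (hb1 An)
  -- expand mcov
  have hexp : mcov P η ξ = mcov P a c - mcov P a d - mcov P b c + mcov P b d := by
    unfold mcov
    have h1 : ∀ ω, η ω * ξ ω = a ω * c ω - a ω * d ω - (b ω * c ω - b ω * d ω) := by
      intro ω; rw [hηeq ω, hξeq ω]; ring
    have h2 : ∀ ω, η ω = a ω - b ω := hηeq
    have h3 : ∀ ω, ξ ω = c ω - d ω := hξeq
    simp_rw [h1, h2, h3]
    have Eacd : ∫ ω, (a ω * c ω - a ω * d ω) ∂P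
        = (∫ ω, a ω * c ω ∂P) - ∫ ω, a ω * d ω ∂P := integral_sub Iac Iad
    have Ebcd : ∫ ω, (b ω * c ω - b ω * d ω) ∂P
        = (∫ ω, b ω * c ω ∂P) - ∫ ω, b ω * d ω ∂P := integral_sub Ibc Ibd
    have Etop : ∫ ω, (a ω * c ω - a ω * d ω - (b ω * c ω - b ω * d ω)) ∂P
        = (∫ ω, (a ω * c ω - a ω * d ω) ∂P) - ∫ ω, (b ω * c ω - b ω * d ω) ∂P :=
      integral_sub (Iac.sub Iad) (Ibc.sub Ibd)
    have Eab : ∫ ω, (a ω - b ω) ∂P = (∫ ω, a ω ∂P) - ∫ ω, b ω ∂P := integral_sub Ia Ib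
    have Ecd : ∫ ω, (c ω - d ω) ∂P = (∫ ω, c ω ∂P) - ∫ ω, d ω ∂P := integral_sub Ic Id
    rw [Etop, Eacd, Ebcd, Eab, Ecd]
    ring
  have t1 := hα Ap Bp hApm hBpm
  have t2 := hα Ap Bn hApm hBnm
  have t3 := hα An Bp hAnm hBpm
  have t4 := hα An Bn hAnm hBnm
  rw [← mcov_indicator P hAp0 hBp0] at t1
  rw [← mcov_indicator P hAp0 hBn0] at t2
  rw [← mcov_indicator P hAn0 hBp0] at t3
  rw [← mcov_indicator P hAn0 hBn0] at t4
  rw [hexp]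
  have e1 := abs_le.mp t1
  have e2 := abs_le.mp t2
  have e3 := abs_le.mp t3
  have e4 := abs_le.mp t4
  rw [abs_le]
  constructor <;> [skip; skip] <;>
    · simp only [ha, hb, hc, hd] at e1 e2 e3 e4 ⊢
      linarith [e1.1, e1.2, e2.1, e2.2, e3.1, e3.2, e4.1, e4.2]

end MixingCovAux

namespace MixingCovAux
set_option linter.unusedSectionVars false

variable {Ω : Type*} {m0 : MeasurableSpace Ω} (P : Measure Ω) [IsProbabilityMeasure P]

lemma master {m₁ m₂ : MeasurableSpace Ω} (hm₁ : m₁ ≤ m0) (hm₂ : m₂ ≤ m0) {α C₁ C₂ : ℝ}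
    (hα : ∀ A B : Set Ω, MeasurableSet[m₁] A → MeasurableSet[m₂] B →
      |(P (A ∩ B)).toReal - (P A).toReal * (P B).toReal| ≤ α)
    (f g : Ω → ℝ) (hf : StronglyMeasurable[m₁] f) (hg : StronglyMeasurable[m₂] g)
    (hfb : ∀ᵐ ω ∂P, |f ω| ≤ C₁) (hgb : ∀ᵐ ω ∂P, |g ω| ≤ C₂) :
    |mcov P f g| ≤ 4 * C₁ * C₂ * α := by
  haveI : (MeasureTheory.ae P).NeBot := ae_neBot.mpr (IsProbabilityMeasure.ne_zero P)
  obtain ⟨ω₁, hω₁⟩ := hfb.exists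
  obtain ⟨ω₂, hω₂⟩ := hgb.exists
  have hC₁ : 0 ≤ C₁ := (abs_nonneg _).trans hω₁
  have hC₂ : 0 ≤ C₂ := (abs_nonneg _).trans hω₂
  have hgint : Integrable g P :=
    int_of_bound P ((hg.mono hm₂).measurable).aestronglyMeasurable hgb
  obtain ⟨η, hηsm, hηv, h1⟩ := reduce P hm₁ f g hf hgint hfb
  have hηb : ∀ᵐ ω ∂P, |η ω| ≤ 1 := Filter.Eventually.of_forall (fun ω => by
    rcases hηv ω with h' | h' | h' <;> simp [h'])
  have hηint : Integrable η P :=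
    int_of_bound P ((hηsm.mono hm₁).measurable).aestronglyMeasurable hηb
  obtain ⟨ξ, hξsm, hξv, h2⟩ := reduce P hm₂ g η hg hηint hgb
  have h3 : |mcov P η ξ| ≤ 4 * α := mcov_sign P hm₁ hm₂ hα η ξ hηsm hξsm hηv hξv
  calc |mcov P f g| ≤ C₁ * mcov P η g := h1
    _ = C₁ * mcov P g η := by rw [mcov_comm]
    _ ≤ C₁ * |mcov P g η| := mul_le_mul_of_nonneg_left (le_abs_self _) hC₁
    _ ≤ C₁ * (C₂ * mcov P ξ η) := mul_le_mul_of_nonneg_left h2 hC₁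
    _ = C₁ * (C₂ * mcov P η ξ) := by rw [mcov_comm]
    _ ≤ C₁ * (C₂ * |mcov P η ξ|) :=
        mul_le_mul_of_nonneg_left (mul_le_mul_of_nonneg_left (le_abs_self _) hC₂) hC₁
    _ ≤ C₁ * (C₂ * (4 * α)) :=
        mul_le_mul_of_nonneg_left (mul_le_mul_of_nonneg_left h3 hC₂) hC₁
    _ = 4 * C₁ * C₂ * α := by ring

end MixingCovAux


/-- Covariance inequality for α-mixing: real bounded case, constant 4. -/
theorem mixing_covariance_real
    {Ω : Type*} [MeasurableSpace Ω] (P : Measure Ω) [IsProbabilityMeasure P]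
    (X₁ X₂ : Ω → ℝ) (hX₁ : Measurable X₁) (hX₂ : Measurable X₂)
    (C₁ C₂ α : ℝ)
    (hb₁ : ∀ᵐ ω ∂P, |X₁ ω| ≤ C₁) (hb₂ : ∀ᵐ ω ∂P, |X₂ ω| ≤ C₂)
    (hmix : ∀ A₁ A₂ : Set Ω,
      MeasurableSet[MeasurableSpace.comap X₁ inferInstance] A₁ →
      MeasurableSet[MeasurableSpace.comap X₂ inferInstance] A₂ →
      |(P (A₁ ∩ A₂)).toReal - (P A₁).toReal * (P A₂).toReal| ≤ α) :
    |(∫ ω, X₁ ω * X₂ ω ∂P) - (∫ ω, X₁ ω ∂P) * (∫ ω, X₂ ω ∂P)| ≤ 4 * C₁ * C₂ * α := by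
  have hm₁ : MeasurableSpace.comap X₁ inferInstance ≤ ‹MeasurableSpace Ω› :=
    measurable_iff_comap_le.mp hX₁
  have hm₂ : MeasurableSpace.comap X₂ inferInstance ≤ ‹MeasurableSpace Ω› :=
    measurable_iff_comap_le.mp hX₂
  have hf : StronglyMeasurable[MeasurableSpace.comap X₁ inferInstance] X₁ :=
    Measurable.stronglyMeasurable (measurable_iff_comap_le.mpr le_rfl)
  have hg : StronglyMeasurable[MeasurableSpace.comap X₂ inferInstance] X₂ :=
    Measurable.stronglyMeasurable (measurable_iff_comap_le.mpr le_rfl)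
  exact MixingCovAux.master P hm₁ hm₂ hmix X₁ X₂ hf hg hb₁ hb₂
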